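/- Let H = {·|1} where 1 = {0|·}, and let U = D(H). Then H is Right U-strong: for every Right end X in U, necessarily of the form k·(conjugate of H) + n·1 with k, n ≥ 0, Right moving first wins H + X under misère play. -/
import Mathlib


/-- A (finite) partizan game: finite lists of Left and Right options. -/
inductive Gm : Type where
  | node : List Gm → List Gm → Gm

/-- The Left options of a game. -/
def Gm.leftOpts : Gm → List Gm
  | .node l _ => l

/-- The Right options of a game. -/
def Gm.rightOpts : Gm → List Gm
  | .node _ r => r

/-- Disjunctive sum of games. -/
def Gm.add : Gm → Gm → Gm
  | .node gl gr, .node hl hr =>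
      .node
        (gl.attach.map (fun g => Gm.add g.1 (.node hl hr)) ++
         hl.attach.map (fun h => Gm.add (.node gl gr) h.1))
        (gr.attach.map (fun g => Gm.add g.1 (.node hl hr)) ++
         hr.attach.map (fun h => Gm.add (.node gl gr) h.1))
termination_by g h => sizeOf g + sizeOf h
decreasing_by
  all_goals first
  | (have := List.sizeOf_lt_of_mem g.2; simp; omega)
  | (have := List.sizeOf_lt_of_mem h.2; simp; omega)

mutual
/-- Left, moving first, wins `G` under misère play (a player unable to move wins):
`G` is a Left end, or some Left option is a loss for Right moving first. -/
def Gm.lwins : Gm → Prop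
  | .node l _ => l = [] ∨ ∃ g ∈ l.attach, ¬ Gm.rwins g.1
termination_by G => sizeOf G
decreasing_by have := List.sizeOf_lt_of_mem g.2; simp; omega

/-- Right, moving first, wins `G` under misère play. -/
def Gm.rwins : Gm → Prop
  | .node _ r => r = [] ∨ ∃ g ∈ r.attach, ¬ Gm.lwins g.1
termination_by G => sizeOf G
decreasing_by have := List.sizeOf_lt_of_mem g.2; simp; omega
end

/-- The game `0`. -/
def Gm.zero : Gm := .node [] []

/-- The game `* = {0|0}`. -/
def Gm.star : Gm := .node [Gm.zero] [Gm.zero]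

/-- The conjugate of a game: swap the roles of Left and Right everywhere. -/
def Gm.conj : Gm → Gm
  | .node l r =>
      .node (r.attach.map (fun g => Gm.conj g.1)) (l.attach.map (fun g => Gm.conj g.1))
termination_by G => sizeOf G
decreasing_by
  all_goals (have := List.sizeOf_lt_of_mem g.2; simp; omega)

/-- `k` copies of `x`, added together. -/
def Gm.ksum : ℕ → Gm → Gm
  | 0, _ => Gm.zero
  | n+1, x => (Gm.ksum n x).add x

/-- The game `1 = {0|·}`. -/
def Gm.one : Gm := .node [Gm.zero] []

lemma Gm.leftOpts_add : ∀ (G H : Gm), (G.add H).leftOpts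
    = G.leftOpts.map (fun g => g.add H) ++ H.leftOpts.map (fun h => G.add h)
  | .node gl gr, .node hl hr => by
    rw [Gm.add]; simp [Gm.leftOpts]

lemma Gm.rightOpts_add : ∀ (G H : Gm), (G.add H).rightOpts
    = G.rightOpts.map (fun g => g.add H) ++ H.rightOpts.map (fun h => G.add h)
  | .node gl gr, .node hl hr => by
    rw [Gm.add]; simp [Gm.rightOpts]

lemma Gm.lwins_iff (G : Gm) :
    G.lwins ↔ (G.leftOpts = [] ∨ ∃ g ∈ G.leftOpts, ¬ g.rwins) := by
  obtain ⟨l, r⟩ := G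
  rw [Gm.lwins]
  simp [Gm.leftOpts]

lemma Gm.rwins_iff (G : Gm) :
    G.rwins ↔ (G.rightOpts = [] ∨ ∃ g ∈ G.rightOpts, ¬ g.lwins) := by
  obtain ⟨l, r⟩ := G
  rw [Gm.rwins]
  simp [Gm.rightOpts]

/-- `S a b c G` : `G` is a disjunctive sum of `a` copies of `1`, `b` copies of
`{-1|·}` (the conjugate of `H`), `c` copies of `-1`, and any number of zeros. -/
inductive S : ℕ → ℕ → ℕ → Gm → Prop
  | one : S 1 0 0 (.node [.node [] []] [])
  | mh : S 0 1 0 (.node [.node [] [.node [] []]] [])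
  | m1 : S 0 0 1 (.node [] [.node [] []])
  | zero : S 0 0 0 (.node [] [])
  | add {a b c a' b' c' G H} : S a b c G → S a' b' c' H →
      S (a + a') (b + b') (c + c') (G.add H)

/-- With no `-1` components, `G` is a Right end. -/
lemma S.rightEnd {a b G} (h : S a b 0 G) : G.rightOpts = [] := by
  generalize hc : 0 = c at h
  induction h with
  | one => simp [Gm.rightOpts]
  | mh => simp [Gm.rightOpts]
  | m1 => omega
  | zero => simp [Gm.rightOpts]
  | add h1 h2 ih1 ih2 =>
    rw [Gm.rightOpts_add, ih1 (by omega), ih2 (by omega)]; simp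

lemma S.cast {a b c a' b' c' : ℕ} {G : Gm} (h : S a b c G)
    (ha : a = a') (hb : b = b') (hc : c = c') : S a' b' c' G := by
  subst ha; subst hb; subst hc; exact h

/-- If `a ≥ 1` then Left has a move. -/
lemma S.leftNonempty {a b c G} (h : S a b c G) (ha : 1 ≤ a) : G.leftOpts ≠ [] := by
  induction h with
  | one => simp [Gm.leftOpts]
  | mh => omega
  | m1 => omega
  | zero => omega
  | add h1 h2 ih1 ih2 =>
    rw [Gm.leftOpts_add]
    intro hnil
    rcases List.append_eq_nil_iff.mp hnil with ⟨hn1, hn2⟩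
    rw [List.map_eq_nil_iff] at hn1 hn2
    rcases Nat.le_or_le 1 _ with hle | hle
    · exact ih1 hle hn1
    · rcases Nat.lt_or_ge 0 _ with hle' | hle'
      · exact ih2 hle' hn2
      · exact ih1 (by omega) hn1

/-- Classification of Left options. -/
lemma S.leftOpt {a b c G} (h : S a b c G) :
    ∀ G' ∈ G.leftOpts, (∃ a', a = a' + 1 ∧ S a' b c G') ∨
      (∃ b', b = b' + 1 ∧ S a b' (c + 1) G') := by
  induction h with
  | one =>
    intro G' hG'
    simp [Gm.leftOpts] at hG'
    subst hG'
    exact Or.inl ⟨0, rfl, S.zero⟩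
  | mh =>
    intro G' hG'
    simp [Gm.leftOpts] at hG'
    subst hG'
    exact Or.inr ⟨0, rfl, S.m1⟩
  | m1 => intro G' hG'; simp [Gm.leftOpts] at hG'
  | zero => intro G' hG'; simp [Gm.leftOpts] at hG'
  | add h1 h2 ih1 ih2 =>
    intro G' hG'
    rw [Gm.leftOpts_add] at hG'
    simp only [List.mem_append, List.mem_map] at hG'
    rcases hG' with ⟨g, hg, rfl⟩ | ⟨g, hg, rfl⟩
    · rcases ih1 g hg with ⟨a'', rfl, hs⟩ | ⟨b'', rfl, hs⟩
      · exact Or.inl ⟨_, by omega, hs.add h2⟩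
      · exact Or.inr ⟨_, by omega, (hs.add h2).cast rfl rfl (by omega)⟩
    · rcases ih2 g hg with ⟨a'', rfl, hs⟩ | ⟨b'', rfl, hs⟩
      · exact Or.inl ⟨_, by omega, h1.add hs⟩
      · exact Or.inr ⟨_, by omega, (h1.add hs).cast rfl rfl (by omega)⟩

/-- If `c ≥ 1` there is a Right option with one fewer `-1`. -/
lemma S.rightOpt {a b c G} (h : S a b c G) : 1 ≤ c →
    ∃ G' ∈ G.rightOpts, S a b (c - 1) G' := by
  induction h with
  | one => omega
  | mh => omega
  | m1 => exact fun _ => ⟨.node [] [], by simp [Gm.rightOpts], S.zero⟩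
  | zero => omega
  | @add a₁ b₁ c₁ a₂ b₂ c₂ G₁ G₂ h1 h2 ih1 ih2 =>
    intro hc
    rcases Nat.eq_zero_or_pos c₁ with hle | hle
    case inr =>
      obtain ⟨G', hG', hs⟩ := ih1 hle
      refine ⟨G'.add G₂, ?_, (hs.add h2).cast rfl rfl (by omega)⟩
      rw [Gm.rightOpts_add]
      exact List.mem_append.mpr (Or.inl (List.mem_map.mpr ⟨G', hG', rfl⟩))
    case inl =>
      have hle2 : 1 ≤ c₂ := by omega
      obtain ⟨G', hG', hs⟩ := ih2 hle2
      refine ⟨G₁.add G', ?_, (h1.add hs).cast rfl rfl (by omega)⟩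
      rw [Gm.rightOpts_add]
      exact List.mem_append.mpr (Or.inr (List.mem_map.mpr ⟨G', hG', rfl⟩))

/-- The main induction: with `a ≥ 1` copies of `1`, Right first wins if there is
one `-1`, and Left first loses if there is none. -/
lemma main : ∀ b : ℕ,
    (∀ a G, S a b 0 G → 1 ≤ a → ¬ G.lwins) ∧
    (∀ a G, S a b 1 G → 1 ≤ a → G.rwins) := by
  intro b
  induction b with
  | zero =>
    constructor
    · intro a G h ha hl
      rcases (Gm.lwins_iff G).mp hl with hnil | ⟨g, hg, hgr⟩
      · exact h.leftNonempty ha hnil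
      · rcases h.leftOpt g hg with ⟨a', rfl, hs⟩ | ⟨b', hb', _⟩
        · exact hgr ((Gm.rwins_iff g).mpr (Or.inl hs.rightEnd))
        · omega
    · intro a G h ha
      obtain ⟨G', hG', hs⟩ := h.rightOpt (by norm_num)
      refine (Gm.rwins_iff G).mpr (Or.inr ⟨G', hG', ?_⟩)
      intro hl
      rcases (Gm.lwins_iff G').mp hl with hnil | ⟨g, hg, hgr⟩
      · exact hs.leftNonempty ha hnil
      · rcases hs.leftOpt g hg with ⟨a', rfl, hs'⟩ | ⟨b', hb', _⟩
        · exact hgr ((Gm.rwins_iff g).mpr (Or.inl hs'.rightEnd))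
        · omega
  | succ b ih =>
    have L1 : ∀ a G, S a (b + 1) 0 G → 1 ≤ a → ¬ G.lwins := by
      intro a G h ha hl
      rcases (Gm.lwins_iff G).mp hl with hnil | ⟨g, hg, hgr⟩
      · exact h.leftNonempty ha hnil
      · rcases h.leftOpt g hg with ⟨a', rfl, hs⟩ | ⟨b', hb', hs⟩
        · exact hgr ((Gm.rwins_iff g).mpr (Or.inl hs.rightEnd))
        · have : b' = b := by omega
          subst this
          exact hgr (ih.2 a g hs ha)
    refine ⟨L1, ?_⟩
    intro a G h ha
    obtain ⟨G', hG', hs⟩ := h.rightOpt (by norm_num)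
    exact (Gm.rwins_iff G).mpr (Or.inr ⟨G', hG', L1 a G' hs ha⟩)

lemma conjH_eq : Gm.conj (Gm.node [] [Gm.one])
    = Gm.node [Gm.node [] [Gm.node [] []]] [] := by
  rw [Gm.conj]
  simp only [List.attach_nil, List.map_nil, List.attach_cons, List.map_cons]
  rw [Gm.one, Gm.conj]
  simp only [List.attach_nil, List.map_nil, List.attach_cons, List.map_cons]
  rw [Gm.zero, Gm.conj]
  simp

lemma S_ksum_one (n : ℕ) : S n 0 0 (Gm.ksum n Gm.one) := by
  induction n with
  | zero => exact S.zero
  | succ n ih => exact (ih.add S.one).cast (by omega) (by omega) (by omega)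

lemma S_ksum_conjH (k : ℕ) : S 0 k 0 (Gm.ksum k (Gm.conj (Gm.node [] [Gm.one]))) := by
  induction k with
  | zero => exact S.zero
  | succ k ih =>
    have hm : S 0 1 0 (Gm.conj (Gm.node [] [Gm.one])) := by rw [conjH_eq]; exact S.mh
    exact (ih.add hm).cast (by omega) (by omega) (by omega)

/-- let `H = {·|1}` and `U = D(H)`. Then `H` is Right `U`-strong:
for every Right end `X` of `U` (necessarily of the form
`k·(conjugate of H) + n·1`), Right moving first wins `H + X` under misère play. -/
theorem stmt16 :
    ∀ k n : ℕ,
      Gm.rwins ((Gm.node [] [Gm.one]).add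
        ((Gm.ksum k (Gm.conj (Gm.node [] [Gm.one]))).add (Gm.ksum n Gm.one))) := by
  intro k n
  set X := (Gm.ksum k (Gm.conj (Gm.node [] [Gm.one]))).add (Gm.ksum n Gm.one) with hX
  have hSX : S n k 0 X := ((S_ksum_conjH k).add (S_ksum_one n)).cast (by omega) (by omega) rfl
  have hS : S (1 + n) (0 + k) 0 (Gm.one.add X) := S.one.add hSX
  refine (Gm.rwins_iff _).mpr (Or.inr ⟨Gm.one.add X, ?_, ?_⟩)
  · rw [Gm.rightOpts_add]
    simp [Gm.rightOpts]
  · exact (main (0 + k)).1 (1 + n) _ hS (by omega)
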